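/- Let {A^x_a}, {B^x_a} be POVMs and |ψ⟩ a unit bipartite state with E_x Σ_a ‖(A^x_a⊗I − I⊗B^x_a)|ψ⟩‖² ≤ δ, and suppose {A^x_a} is projective for every x. Then 1 − E_x Σ_a ⟨ψ|A^x_a ⊗ B^x_a|ψ⟩ ≤ √δ, i.e., closeness in state-dependent distance with one projective side implies consistency up to a square-root loss. -/
import Mathlib


open Kronecker Matrix
open scoped ComplexOrder

/-- The squared Hilbert-space norm `‖v‖² = ⟨v, v⟩` of a vector. -/
noncomputable def nsq {I : Type*} [Fintype I] (v : I → ℂ) : ℝ := (star v ⬝ᵥ v).re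

section aux

variable {I J α : Type*} [Fintype I] [Fintype J] [Fintype α] [DecidableEq I] [DecidableEq J]

lemma nsq_eq_sum (v : I → ℂ) : nsq v = ∑ i, ‖v i‖ ^ 2 := by
  simp [nsq, dotProduct, Complex.re_sum]
  congr 1; ext i
  rw [← Complex.normSq_eq_norm_sq]
  simp [Complex.normSq_apply, Complex.mul_re, sq]

lemma nsq_nonneg (v : I → ℂ) : 0 ≤ nsq v := by
  rw [nsq_eq_sum]; positivity

lemma kron_conjTranspose (M : Matrix I I ℂ) (N : Matrix J J ℂ) :
    (M ⊗ₖ N)ᴴ = Mᴴ ⊗ₖ Nᴴ := by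
  ext ⟨i, j⟩ ⟨k, l⟩
  simp [conjTranspose_apply, kroneckerMap_apply, mul_comm]

lemma sum_kron_one (A : α → Matrix I I ℂ) :
    ∑ a, A a ⊗ₖ (1 : Matrix J J ℂ) = (∑ a, A a) ⊗ₖ (1 : Matrix J J ℂ) := by
  ext ⟨i, j⟩ ⟨k, l⟩
  simp [kroneckerMap_apply, Finset.sum_mul, Matrix.sum_apply]

/-- ⟨M ψ, N ψ⟩ = ⟨ψ, (Mᴴ N) ψ⟩. -/
lemma star_mulVec_dot (M N : Matrix I I ℂ) (ψ : I → ℂ) :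
    star (M *ᵥ ψ) ⬝ᵥ (N *ᵥ ψ) = star ψ ⬝ᵥ ((Mᴴ * N) *ᵥ ψ) := by
  rw [star_mulVec, ← dotProduct_mulVec, mulVec_mulVec]

/-- Cauchy–Schwarz for the real part of a sum of complex dot products. -/
lemma re_sum_dot_le (u w : α → I → ℂ) :
    ∑ a, (star (u a) ⬝ᵥ w a).re ≤
      Real.sqrt (∑ a, nsq (u a)) * Real.sqrt (∑ a, nsq (w a)) := by
  have h1 : ∀ a, (star (u a) ⬝ᵥ w a).re ≤ ∑ i, ‖u a i‖ * ‖w a i‖ := by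
    intro a
    rw [dotProduct, Complex.re_sum]
    refine Finset.sum_le_sum fun i _ => ?_
    calc ((star (u a)) i * w a i).re ≤ ‖(star (u a)) i * w a i‖ := Complex.re_le_norm _
      _ = ‖u a i‖ * ‖w a i‖ := by simp [norm_mul]
  calc ∑ a, (star (u a) ⬝ᵥ w a).re ≤ ∑ a, ∑ i, ‖u a i‖ * ‖w a i‖ :=
        Finset.sum_le_sum fun a _ => h1 a
    _ = ∑ p : α × I, ‖u p.1 p.2‖ * ‖w p.1 p.2‖ := by
        rw [← Finset.univ_product_univ, Finset.sum_product]
    _ ≤ Real.sqrt (∑ p : α × I, ‖u p.1 p.2‖ ^ 2) *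
          Real.sqrt (∑ p : α × I, ‖w p.1 p.2‖ ^ 2) :=
        Real.sum_mul_le_sqrt_mul_sqrt _ _ _
    _ = Real.sqrt (∑ a, nsq (u a)) * Real.sqrt (∑ a, nsq (w a)) := by
        rw [← Finset.univ_product_univ, Finset.sum_product, Finset.sum_product]
        simp [nsq_eq_sum]

end aux

/-- Let `{A^x_a}`, `{B^x_a}` be POVMs and `|ψ⟩` a unit bipartite state
with `E_x Σ_a ‖(A^x_a ⊗ I − I ⊗ B^x_a)|ψ⟩‖² ≤ δ`, and suppose `{A^x_a}` is projective
for every `x`.  Then `1 − E_x Σ_a ⟨ψ|A^x_a ⊗ B^x_a|ψ⟩ ≤ √δ`: closeness in the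
state-dependent distance with one projective side implies consistency up to a square-root
loss. -/
theorem state_dependent_distance_implies_consistency
    {X α I J : Type*} [Fintype X] [Fintype α] [Fintype I] [Fintype J]
    [DecidableEq I] [DecidableEq J]
    (μ : X → ℝ) (hμ0 : ∀ x, 0 ≤ μ x) (hμ1 : ∑ x, μ x = 1)
    (A : X → α → Matrix I I ℂ) (B : X → α → Matrix J J ℂ)
    (hA : ∀ x a, (A x a).PosSemidef) (hAsum : ∀ x, ∑ a, A x a = 1)
    (hAproj : ∀ x a, A x a * A x a = A x a)
    (hB : ∀ x a, (B x a).PosSemidef) (hBsum : ∀ x, ∑ a, B x a = 1)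
    (ψ : I × J → ℂ) (hψ : star ψ ⬝ᵥ ψ = 1) (δ : ℝ)
    (hdist : ∑ x, μ x * ∑ a,
        nsq ((A x a ⊗ₖ (1 : Matrix J J ℂ) -
          (1 : Matrix I I ℂ) ⊗ₖ B x a).mulVec ψ) ≤ δ) :
    1 - ∑ x, μ x * ∑ a, (star ψ ⬝ᵥ (A x a ⊗ₖ B x a).mulVec ψ).re ≤ Real.sqrt δ := by
  classical
  set d : X → ℝ := fun x => ∑ a,
      nsq ((A x a ⊗ₖ (1 : Matrix J J ℂ) -
        (1 : Matrix I I ℂ) ⊗ₖ B x a).mulVec ψ) with hd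
  have hd0 : ∀ x, 0 ≤ d x := fun x => Finset.sum_nonneg fun a _ => nsq_nonneg _
  -- hermiticity of A x a ⊗ₖ 1
  have hherm : ∀ x a, (A x a ⊗ₖ (1 : Matrix J J ℂ))ᴴ = A x a ⊗ₖ 1 := by
    intro x a
    rw [kron_conjTranspose, (hA x a).isHermitian.eq, conjTranspose_one]
  -- key per-x bound
  have key : ∀ x,
      1 - ∑ a, (star ψ ⬝ᵥ (A x a ⊗ₖ B x a).mulVec ψ).re ≤ Real.sqrt (d x) := by
    intro x
    set u : α → (I × J) → ℂ := fun a => (A x a ⊗ₖ (1 : Matrix J J ℂ)) *ᵥ ψ with hu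
    set w : α → (I × J) → ℂ := fun a =>
      (A x a ⊗ₖ (1 : Matrix J J ℂ) - (1 : Matrix I I ℂ) ⊗ₖ B x a) *ᵥ ψ with hw
    -- ⟨ψ, (A⊗1) ψ⟩ real terms sum to 1
    have hsum1 : ∑ a, (star ψ ⬝ᵥ ((A x a ⊗ₖ (1 : Matrix J J ℂ)) *ᵥ ψ)).re = 1 := by
      have : ∑ a, star ψ ⬝ᵥ ((A x a ⊗ₖ (1 : Matrix J J ℂ)) *ᵥ ψ) = 1 := by
        calc ∑ a, star ψ ⬝ᵥ ((A x a ⊗ₖ (1 : Matrix J J ℂ)) *ᵥ ψ)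
            = star ψ ⬝ᵥ ((∑ a, A x a ⊗ₖ (1 : Matrix J J ℂ)) *ᵥ ψ) := by
              simp only [dotProduct, Matrix.mulVec, Matrix.sum_apply, Finset.sum_mul,
                Finset.mul_sum]
              rw [Finset.sum_comm]
              exact Finset.sum_congr rfl fun i _ => Finset.sum_comm
          _ = 1 := by
              rw [sum_kron_one, hAsum, one_kronecker_one, one_mulVec, hψ]
      rw [← Complex.re_sum, this, Complex.one_re]
    -- pointwise term identity
    have hterm : ∀ a, (star (u a) ⬝ᵥ w a).re =
        (star ψ ⬝ᵥ ((A x a ⊗ₖ (1 : Matrix J J ℂ)) *ᵥ ψ)).re -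
        (star ψ ⬝ᵥ ((A x a ⊗ₖ B x a) *ᵥ ψ)).re := by
      intro a
      have : star (u a) ⬝ᵥ w a =
          star ψ ⬝ᵥ ((A x a ⊗ₖ (1 : Matrix J J ℂ)) *ᵥ ψ) -
          star ψ ⬝ᵥ ((A x a ⊗ₖ B x a) *ᵥ ψ) := by
        simp only [hu, hw, star_mulVec_dot, hherm x a, Matrix.mul_sub,
          ← mul_kronecker_mul, Matrix.mul_one, Matrix.one_mul, hAproj,
          Matrix.sub_mulVec, dotProduct_sub]
      rw [this, Complex.sub_re]
    -- Σ nsq (u a) = 1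
    have hnu : ∑ a, nsq (u a) = 1 := by
      have : ∀ a, nsq (u a) = (star ψ ⬝ᵥ ((A x a ⊗ₖ (1 : Matrix J J ℂ)) *ᵥ ψ)).re := by
        intro a
        have : star (u a) ⬝ᵥ u a = star ψ ⬝ᵥ ((A x a ⊗ₖ (1 : Matrix J J ℂ)) *ᵥ ψ) := by
          rw [hu, star_mulVec_dot, hherm, ← mul_kronecker_mul, hAproj, one_mul]
        rw [nsq, this]
      simp_rw [this]; exact hsum1
    calc 1 - ∑ a, (star ψ ⬝ᵥ (A x a ⊗ₖ B x a).mulVec ψ).re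
        = ∑ a, (star (u a) ⬝ᵥ w a).re := by
          simp [hterm, Finset.sum_sub_distrib, hsum1]
      _ ≤ Real.sqrt (∑ a, nsq (u a)) * Real.sqrt (∑ a, nsq (w a)) := re_sum_dot_le u w
      _ = Real.sqrt (d x) := by rw [hnu, Real.sqrt_one, one_mul]
  -- combine over x
  have step1 : 1 - ∑ x, μ x * ∑ a, (star ψ ⬝ᵥ (A x a ⊗ₖ B x a).mulVec ψ).re
      ≤ ∑ x, μ x * Real.sqrt (d x) := by
    have : 1 - ∑ x, μ x * ∑ a, (star ψ ⬝ᵥ (A x a ⊗ₖ B x a).mulVec ψ).re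
        = ∑ x, μ x * (1 - ∑ a, (star ψ ⬝ᵥ (A x a ⊗ₖ B x a).mulVec ψ).re) := by
      simp [mul_sub, Finset.sum_sub_distrib, ← Finset.sum_mul, hμ1]
    rw [this]
    exact Finset.sum_le_sum fun x _ =>
      mul_le_mul_of_nonneg_left (key x) (hμ0 x)
  have step2 : ∑ x, μ x * Real.sqrt (d x) ≤ Real.sqrt (∑ x, μ x * d x) := by
    have heq : ∀ x, μ x * Real.sqrt (d x) = Real.sqrt (μ x) * Real.sqrt (μ x * d x) := by
      intro x
      rw [Real.sqrt_mul (hμ0 x), ← mul_assoc, Real.mul_self_sqrt (hμ0 x)]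
    calc ∑ x, μ x * Real.sqrt (d x) = ∑ x, Real.sqrt (μ x) * Real.sqrt (μ x * d x) := by
          simp_rw [heq]
      _ ≤ Real.sqrt (∑ x, μ x) * Real.sqrt (∑ x, μ x * d x) :=
          Real.sum_sqrt_mul_sqrt_le _ hμ0 (fun x => mul_nonneg (hμ0 x) (hd0 x))
      _ = Real.sqrt (∑ x, μ x * d x) := by rw [hμ1, Real.sqrt_one, one_mul]
  have step3 : Real.sqrt (∑ x, μ x * d x) ≤ Real.sqrt δ :=
    Real.sqrt_le_sqrt hdist
  linarith
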